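/- Let n ≥ 1 and p_1, …, p_n ∈ [0,1). For a nonempty subset s ⊆ {1, …, n} write p_s = ∏_{i∈s} p_i. Then ∑_{k=1}^∞ (1 − ∏_{i=1}^n (1 − p_i^k)) = ∑_{∅ ≠ s ⊆ {1,…,n}} (−1)^{|s|−1} (1/(1 − p_s) − 1), where both sides are finite. -/

import Mathlib

open Finset

lemma key_expand (n : ℕ) (p : Fin n → ℝ) (k : ℕ) :
    1 - ∏ i, (1 - p i ^ (k + 1))
      = ∑ s ∈ Finset.univ.powerset.filter (fun s : Finset (Fin n) => s.Nonempty),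
          (-1 : ℝ) ^ (s.card - 1) * (∏ i ∈ s, p i) ^ (k + 1) := by
  have h : ∀ i : Fin n, (1 : ℝ) - p i ^ (k + 1) = (-(p i ^ (k + 1))) + 1 := by
    intro i; ring
  have hfil : Finset.univ.powerset.filter (fun s : Finset (Fin n) => s.Nonempty)
      = (Finset.univ.powerset (α := Fin n)).erase ∅ := by
    ext s
    simp [Finset.nonempty_iff_ne_empty, and_comm]
  rw [Finset.prod_congr rfl (fun i _ => h i), Finset.prod_add]
  rw [hfil]
  rw [← Finset.sum_erase_add _ _ (Finset.empty_mem_powerset (Finset.univ : Finset (Fin n)))]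
  have hS : 1 - (∑ s ∈ (Finset.univ.powerset (α := Fin n)).erase ∅,
        (∏ i ∈ s, -(p i ^ (k + 1))) * ∏ i ∈ Finset.univ \ s, (1:ℝ)
      + (∏ i ∈ (∅ : Finset (Fin n)), -(p i ^ (k + 1))) * ∏ i ∈ Finset.univ \ (∅ : Finset (Fin n)), (1:ℝ))
      = ∑ s ∈ (Finset.univ.powerset (α := Fin n)).erase ∅,
        -((∏ i ∈ s, -(p i ^ (k + 1))) * ∏ i ∈ Finset.univ \ s, (1:ℝ)) := by
    rw [Finset.sum_neg_distrib]
    simp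
  rw [hS]
  refine Finset.sum_congr rfl ?_
  intro s hs
  have hne : s ≠ ∅ := (Finset.mem_erase.mp hs).1
  have hcard : 1 ≤ s.card := Finset.card_pos.mpr (Finset.nonempty_iff_ne_empty.mpr hne)
  rw [Finset.prod_const_one, mul_one]
  have h2 : ∏ i ∈ s, -(p i ^ (k + 1)) = (-1 : ℝ) ^ s.card * (∏ i ∈ s, p i) ^ (k + 1) := by
    rw [Finset.prod_congr rfl (fun i _ => (neg_one_mul (p i ^ (k + 1))).symm),
      Finset.prod_mul_distrib, Finset.prod_const, Finset.prod_pow]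
  rw [h2]
  have h1 : (-1 : ℝ) ^ s.card = -(-1 : ℝ) ^ (s.card - 1) := by
    conv_lhs => rw [show s.card = (s.card - 1) + 1 from by omega]
    rw [pow_succ]; ring
  rw [h1]; ring

theorem stmt_12 (n : ℕ) (hn : 1 ≤ n) (p : Fin n → ℝ)
    (hp : ∀ i, p i ∈ Set.Ico (0 : ℝ) 1) :
    Summable (fun k : ℕ => 1 - ∏ i, (1 - p i ^ (k + 1))) ∧
    ∑' k : ℕ, (1 - ∏ i, (1 - p i ^ (k + 1)))
      = ∑ s ∈ Finset.univ.powerset.filter (fun s : Finset (Fin n) => s.Nonempty),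
          (-1 : ℝ) ^ (s.card - 1) * (1 / (1 - ∏ i ∈ s, p i) - 1) := by
  set F := Finset.univ.powerset.filter (fun s : Finset (Fin n) => s.Nonempty) with hF
  have hps0 : ∀ s ∈ F, 0 ≤ ∏ i ∈ s, p i := by
    intro s _
    exact Finset.prod_nonneg fun i _ => (hp i).1
  have hps1 : ∀ s ∈ F, ∏ i ∈ s, p i < 1 := by
    intro s hs
    obtain ⟨j, hj⟩ := (Finset.mem_filter.mp hs).2
    rw [← Finset.mul_prod_erase _ _ hj]
    calc p j * ∏ i ∈ s.erase j, p i ≤ p j * 1 := by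
            apply mul_le_mul_of_nonneg_left _ (hp j).1
            exact Finset.prod_le_one (fun i _ => (hp i).1) (fun i _ => (hp i).2.le)
      _ < 1 := by rw [mul_one]; exact (hp j).2
  have hsumm : ∀ s ∈ F, Summable (fun k : ℕ =>
      (-1 : ℝ) ^ (s.card - 1) * (∏ i ∈ s, p i) ^ (k + 1)) := by
    intro s hs
    apply Summable.mul_left
    have : Summable (fun k : ℕ => (∏ i ∈ s, p i) ^ k) :=
      summable_geometric_of_lt_one (hps0 s hs) (hps1 s hs)
    simpa [pow_succ'] using this.mul_left (∏ i ∈ s, p i)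
  have hSummable : Summable (fun k : ℕ => 1 - ∏ i, (1 - p i ^ (k + 1))) := by
    have heq : (fun k : ℕ => 1 - ∏ i, (1 - p i ^ (k + 1)))
        = fun k : ℕ => ∑ s ∈ F, (-1 : ℝ) ^ (s.card - 1) * (∏ i ∈ s, p i) ^ (k + 1) :=
      funext (key_expand n p)
    rw [heq]
    exact (hasSum_sum fun s hs => (hsumm s hs).hasSum).summable
  refine ⟨hSummable, ?_⟩
  calc ∑' k : ℕ, (1 - ∏ i, (1 - p i ^ (k + 1)))
      = ∑' k : ℕ, ∑ s ∈ F, (-1 : ℝ) ^ (s.card - 1) * (∏ i ∈ s, p i) ^ (k + 1) :=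
        tsum_congr (key_expand n p)
    _ = ∑ s ∈ F, ∑' k : ℕ, (-1 : ℝ) ^ (s.card - 1) * (∏ i ∈ s, p i) ^ (k + 1) :=
        Summable.tsum_finsetSum hsumm
    _ = ∑ s ∈ F, (-1 : ℝ) ^ (s.card - 1) * (1 / (1 - ∏ i ∈ s, p i) - 1) := by
        refine Finset.sum_congr rfl ?_
        intro s hs
        set r := ∏ i ∈ s, p i with hr
        have hr1 : r < 1 := hps1 s hs
        have hr0 : (0 : ℝ) ≤ r := hps0 s hs
        have hne : 1 - r ≠ 0 := by linarith
        have hgeo : Summable (fun k : ℕ => r ^ k) :=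
          summable_geometric_of_lt_one hr0 hr1
        rw [tsum_mul_left]
        congr 1
        have : (fun k : ℕ => r ^ (k + 1)) = fun k : ℕ => r * r ^ k := by
          funext k; rw [pow_succ']
        rw [this, tsum_mul_left, tsum_geometric_of_lt_one hr0 hr1]
        field_simp
        ring
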